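/- Let (Ω, F, P) be a probability space, let D be an a.s. strictly positive integrable random variable with E[D] = 1, and let U_M, U_L be utility functions on (0,∞) such that U_M is more risk averse than U_L, i.e. −U_M''(x)/U_M'(x) ≥ −U_L''(x)/U_L'(x) for all x > 0. Let X_M and X_L be a.s. strictly positive integrable random variables satisfying the first-order conditions U_M'(X_M) = D and U_L'(X_L) = D almost surely, and suppose D·X_M and D·X_L are integrable with E[D·X_M] = E[D·X_L] (equal budgets). Then E[X_M] ≤ E[X_L] and E[(X_M−K)⁺] ≤ E[(X_L−K)⁺] for every K ∈ ℝ; that is, X_M ≤_MC X_L. -/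

import Mathlib

open MeasureTheory Set Filter

/-- Elementary: for `b ≤ a`, the difference of call payoffs is at most `a - b`. -/
lemma call_diff_le {a b K : ℝ} (h : b ≤ a) :
    max (a - K) 0 - max (b - K) 0 ≤ a - b := by
  simp only [max_def]
  split_ifs <;> linarith

/-- **Monotone convex order in complete markets (Dybvig–Wang / Theorem 1).**
Let `D` be an a.s. strictly positive integrable density with `E[D] = 1`, and let
`U_M, U_L` be utility functions on `(0,∞)` (twice differentiable, `U' > 0`, `U'' < 0`,
Inada conditions) such that `U_M` is more risk averse than `U_L`.  If the a.s. strictly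
positive integrable payoffs `X_M, X_L` satisfy the first-order conditions
`U_M'(X_M) = D`, `U_L'(X_L) = D` a.s. and have equal budgets `E[D·X_M] = E[D·X_L]`,
then `E[X_M] ≤ E[X_L]` and `X_M ≤_MC X_L`. -/
theorem more_risk_averse_monotone_convex_order
    {Ω : Type*} [MeasureSpace Ω] [IsProbabilityMeasure (volume : Measure Ω)]
    (D : Ω → ℝ) (hDpos : ∀ᵐ ω, 0 < D ω) (hDint : Integrable D)
    (hDmean : (∫ ω, D ω) = 1)
    (UM UM' UM'' UL UL' UL'' : ℝ → ℝ)
    (hUMd : ∀ x > (0 : ℝ), HasDerivAt UM (UM' x) x)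
    (hUMd' : ∀ x > (0 : ℝ), HasDerivAt UM' (UM'' x) x)
    (hULd : ∀ x > (0 : ℝ), HasDerivAt UL (UL' x) x)
    (hULd' : ∀ x > (0 : ℝ), HasDerivAt UL' (UL'' x) x)
    (hUM'pos : ∀ x > (0 : ℝ), 0 < UM' x) (hUM''neg : ∀ x > (0 : ℝ), UM'' x < 0)
    (hUL'pos : ∀ x > (0 : ℝ), 0 < UL' x) (hUL''neg : ∀ x > (0 : ℝ), UL'' x < 0)
    (hUMinada0 : Tendsto UM' (nhdsWithin 0 (Ioi 0)) atTop)
    (hUMinadaTop : Tendsto UM' atTop (nhds 0))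
    (hULinada0 : Tendsto UL' (nhdsWithin 0 (Ioi 0)) atTop)
    (hULinadaTop : Tendsto UL' atTop (nhds 0))
    (hRA : ∀ x > (0 : ℝ), -UL'' x / UL' x ≤ -UM'' x / UM' x)
    (XM XL : Ω → ℝ)
    (hXMpos : ∀ᵐ ω, 0 < XM ω) (hXLpos : ∀ᵐ ω, 0 < XL ω)
    (hXMint : Integrable XM) (hXLint : Integrable XL)
    (hfocM : ∀ᵐ ω, UM' (XM ω) = D ω) (hfocL : ∀ᵐ ω, UL' (XL ω) = D ω)
    (hDXMint : Integrable (fun ω => D ω * XM ω))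
    (hDXLint : Integrable (fun ω => D ω * XL ω))
    (hbudget : (∫ ω, D ω * XM ω) = ∫ ω, D ω * XL ω) :
    (∫ ω, XM ω) ≤ (∫ ω, XL ω) ∧
      ∀ K : ℝ, ∫ ω, max (XM ω - K) 0 ≤ ∫ ω, max (XL ω - K) 0 := by
  -- the ratio of marginal utilities
  set r : ℝ → ℝ := fun x => UL' x / UM' x with hrdef
  have hrd : ∀ x ∈ Ioi (0:ℝ), HasDerivAt r
      ((UL'' x * UM' x - UL' x * UM'' x) / (UM' x) ^ 2) x := fun x hx =>
    (hULd' x hx).div (hUMd' x hx) (ne_of_gt (hUM'pos x hx))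
  have hrmono : MonotoneOn r (Ioi 0) := by
    apply monotoneOn_of_deriv_nonneg (convex_Ioi 0)
      (fun x hx => (hrd x hx).continuousAt.continuousWithinAt)
      (fun x hx => by
        rw [interior_Ioi] at hx
        exact (hrd x hx).differentiableAt.differentiableWithinAt)
    intro x hx
    rw [interior_Ioi] at hx
    rw [(hrd x hx).deriv]
    have h1 := hRA x hx
    have h2 := hUM'pos x hx
    have h3 := hUL'pos x hx
    rw [div_le_div_iff₀ h3 h2] at h1
    apply div_nonneg _ (by positivity)
    nlinarith
  have hMant : StrictAntiOn UM' (Ioi 0) :=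
    strictAntiOn_of_deriv_neg (convex_Ioi 0)
      (fun x hx => (hUMd' x hx).continuousAt.continuousWithinAt)
      (fun x hx => by
        rw [interior_Ioi] at hx
        rw [(hUMd' x hx).deriv]; exact hUM''neg x hx)
  have hLant : StrictAntiOn UL' (Ioi 0) :=
    strictAntiOn_of_deriv_neg (convex_Ioi 0)
      (fun x hx => (hULd' x hx).continuousAt.continuousWithinAt)
      (fun x hx => by
        rw [interior_Ioi] at hx
        rw [(hULd' x hx).deriv]; exact hUL''neg x hx)
  have hr_le_iff : ∀ x, 0 < x → (r x ≤ 1 ↔ UL' x ≤ UM' x) := fun x hx =>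
    div_le_one (hUM'pos x hx)
  have hr_ge_iff : ∀ x, 0 < x → (1 ≤ r x ↔ UM' x ≤ UL' x) := fun x hx =>
    one_le_div (hUM'pos x hx)
  -- integral of the discounted difference vanishes
  have hDdiff_int : Integrable (fun ω => D ω * XM ω - D ω * XL ω) := hDXMint.sub hDXLint
  have hDdiff0 : (∫ ω, (D ω * XM ω - D ω * XL ω)) = 0 := by
    rw [integral_sub hDXMint hDXLint, hbudget, sub_self]
  by_cases hB : ∃ b, 0 < b ∧ 1 < r b
  · by_cases hA : ∃ a, 0 < a ∧ r a ≤ 1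
    · -- main case: single crossing at c
      obtain ⟨a, ha0, hra⟩ := hA
      obtain ⟨b, hb0, hrb⟩ := hB
      set S : Set ℝ := {x : ℝ | 0 < x ∧ r x ≤ 1} with hSdef
      have hSne : S.Nonempty := ⟨a, ha0, hra⟩
      have hSbdd : BddAbove S := by
        refine ⟨b, fun x hx => ?_⟩
        by_contra hbx
        push_neg at hbx
        exact absurd ((hrmono (mem_Ioi.mpr hb0) (mem_Ioi.mpr hx.1) hbx.le).trans hx.2)
          (not_le.mpr hrb)
      set c := sSup S with hcdef
      have hac : a ≤ c := le_csSup hSbdd ⟨ha0, hra⟩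
      have hc0 : 0 < c := lt_of_lt_of_le ha0 hac
      have hgt : ∀ x, c < x → 1 < r x := by
        intro x hcx
        by_contra hle
        push_neg at hle
        exact absurd (le_csSup hSbdd ⟨lt_trans hc0 hcx, hle⟩) (not_le.mpr hcx)
      have hle' : ∀ x, 0 < x → x < c → r x ≤ 1 := by
        intro x hx0 hxc
        obtain ⟨y, hyS, hxy⟩ := exists_lt_of_lt_csSup hSne hxc
        exact (hrmono (mem_Ioi.mpr hx0) (mem_Ioi.mpr hyS.1) hxy.le).trans hyS.2
      have hrc : r c = 1 := by
        have hco : ContinuousAt r c := (hrd c hc0).continuousAt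
        have h1 : r c ≤ 1 := by
          refine le_of_tendsto (hco.continuousWithinAt : ContinuousWithinAt r (Iio c) c) ?_
          filter_upwards [self_mem_nhdsWithin,
            eventually_nhdsWithin_of_eventually_nhds (eventually_gt_nhds hc0)] with x hx1 hx2
          exact hle' x hx2 hx1
        have h2 : 1 ≤ r c := by
          refine ge_of_tendsto (hco.continuousWithinAt : ContinuousWithinAt r (Ioi c) c) ?_
          filter_upwards [self_mem_nhdsWithin] with x hx1
          exact (hgt x hx1).le
        linarith
      have hMLc : UM' c = UL' c := by
        have h1 : UL' c / UM' c = 1 := hrc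
        exact ((div_eq_one_iff_eq (ne_of_gt (hUM'pos c hc0))).mp h1).symm
      set dstar := UL' c with hdstardef
      have hdstar0 : 0 < dstar := hUL'pos c hc0
      -- key pointwise facts, given the focs at a point ω
      have key : ∀ xm xl, 0 < xm → 0 < xl → UM' xm = UL' xl →
          (dstar ≤ UL' xl → xl ≤ xm ∧ (xm - xl) * dstar ≤ UL' xl * (xm - xl)) ∧
          (UL' xl < dstar → xm ≤ xl ∧ c < xl ∧ c < xm ∧
            (xm - xl) * dstar ≤ UL' xl * (xm - xl)) := by
        intro xm xl hxm hxl hfoc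
        constructor
        · intro hd
          have hXLc : xl ≤ c :=
            (hLant.le_iff_ge (mem_Ioi.mpr hc0) (mem_Ioi.mpr hxl)).mp hd
          have hrXL : r xl ≤ 1 :=
            (hrmono (mem_Ioi.mpr hxl) (mem_Ioi.mpr hc0) hXLc).trans hrc.le
          have hULM : UL' xl ≤ UM' xl := (hr_le_iff xl hxl).mp hrXL
          have hlm : xl ≤ xm := by
            have : UM' xm ≤ UM' xl := by rw [hfoc]; exact hULM
            exact (hMant.le_iff_ge (mem_Ioi.mpr hxm) (mem_Ioi.mpr hxl)).mp this
          exact ⟨hlm, by nlinarith⟩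
        · intro hd
          have hcXL : c < xl :=
            (hLant.lt_iff_gt (mem_Ioi.mpr hxl) (mem_Ioi.mpr hc0)).mp hd
          have hrXL : 1 ≤ r xl := by
            rw [← hrc]
            exact hrmono (mem_Ioi.mpr hc0) (mem_Ioi.mpr hxl) hcXL.le
          have hULM : UM' xl ≤ UL' xl := (hr_ge_iff xl hxl).mp hrXL
          have hml : xm ≤ xl := by
            have : UM' xl ≤ UM' xm := by rw [hfoc]; exact hULM
            exact (hMant.le_iff_ge (mem_Ioi.mpr hxl) (mem_Ioi.mpr hxm)).mp this
          have hcXM : c < xm := by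
            have : UM' xm < UM' c := by rw [hfoc, hMLc] at *; exact hd
            exact (hMant.lt_iff_gt (mem_Ioi.mpr hxm) (mem_Ioi.mpr hc0)).mp this
          exact ⟨hml, hcXL, hcXM, by nlinarith⟩
      -- the weight function
      have hWint : Integrable (fun ω => dstar⁻¹ * (D ω * XM ω - D ω * XL ω)) :=
        hDdiff_int.const_mul _
      have hWzero : (∫ ω, dstar⁻¹ * (D ω * XM ω - D ω * XL ω)) = 0 := by
        rw [integral_const_mul, hDdiff0, mul_zero]
      have hWbound : ∀ xm xl, 0 < xm → 0 < xl → UM' xm = UL' xl →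
          (xm - xl) * dstar ≤ UL' xl * (xm - xl) := by
        intro xm xl hxm hxl hfoc
        rcases le_or_gt dstar (UL' xl) with hd | hd
        · exact ((key xm xl hxm hxl hfoc).1 hd).2
        · exact ((key xm xl hxm hxl hfoc).2 hd).2.2.2
      constructor
      · -- means
        have hpt : ∀ᵐ ω, XM ω - XL ω ≤ dstar⁻¹ * (D ω * XM ω - D ω * XL ω) := by
          filter_upwards [hXMpos, hXLpos, hfocM, hfocL] with ω hm hl hfm hfl
          have hfoc : UM' (XM ω) = UL' (XL ω) := by rw [hfm, hfl]
          have := hWbound (XM ω) (XL ω) hm hl hfoc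
          rw [inv_mul_eq_div, le_div_iff₀ hdstar0, ← hfl]
          nlinarith
        have hdint : Integrable (fun ω => XM ω - XL ω) := hXMint.sub hXLint
        have := integral_mono_ae hdint hWint hpt
        rw [integral_sub hXMint hXLint, hWzero] at this
        linarith
      · intro K
        have hMKint : Integrable (fun ω => max (XM ω - K) 0) :=
          (hXMint.sub (integrable_const K)).pos_part
        have hLKint : Integrable (fun ω => max (XL ω - K) 0) :=
          (hXLint.sub (integrable_const K)).pos_part
        rcases le_or_gt c K with hK | hK
        · -- strike above crossing: pointwise dominance
          apply integral_mono_ae hMKint hLKint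
          filter_upwards [hXMpos, hXLpos, hfocM, hfocL] with ω hm hl hfm hfl
          have hfoc : UM' (XM ω) = UL' (XL ω) := by rw [hfm, hfl]
          rcases le_or_gt (XM ω) K with hXK | hXK
          · exact max_le (by linarith [le_max_right (XL ω - K) (0:ℝ)]) (le_max_right _ _)
          · have hcXM : c < XM ω := lt_of_le_of_lt hK hXK
            have hDd : UL' (XL ω) < dstar := by
              have h1 : UM' (XM ω) < UM' c :=
                (hMant.lt_iff_gt (mem_Ioi.mpr hm) (mem_Ioi.mpr hc0)).mpr hcXM
              rw [hfoc, hMLc] at h1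
              exact h1
            have hml : XM ω ≤ XL ω := ((key (XM ω) (XL ω) hm hl hfoc).2 hDd).1
            exact max_le_max (by linarith) le_rfl
        · -- strike below crossing: bound by weighted difference
          have hpt : ∀ᵐ ω, max (XM ω - K) 0 - max (XL ω - K) 0 ≤
              dstar⁻¹ * (D ω * XM ω - D ω * XL ω) := by
            filter_upwards [hXMpos, hXLpos, hfocM, hfocL] with ω hm hl hfm hfl
            have hfoc : UM' (XM ω) = UL' (XL ω) := by rw [hfm, hfl]
            have hW := hWbound (XM ω) (XL ω) hm hl hfoc
            rcases le_or_gt dstar (UL' (XL ω)) with hd | hd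
            · have hlm : XL ω ≤ XM ω := ((key (XM ω) (XL ω) hm hl hfoc).1 hd).1
              have h1 : max (XM ω - K) 0 - max (XL ω - K) 0 ≤ XM ω - XL ω :=
                call_diff_le hlm
              rw [inv_mul_eq_div, le_div_iff₀ hdstar0, ← hfl]
              nlinarith
            · obtain ⟨hml, hcXL, hcXM, _⟩ := (key (XM ω) (XL ω) hm hl hfoc).2 hd
              rw [max_eq_left (by linarith : (0:ℝ) ≤ XM ω - K),
                max_eq_left (by linarith : (0:ℝ) ≤ XL ω - K)]
              rw [inv_mul_eq_div, le_div_iff₀ hdstar0, ← hfl]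
              nlinarith
          have hdint : Integrable (fun ω => max (XM ω - K) 0 - max (XL ω - K) 0) :=
            hMKint.sub hLKint
          have := integral_mono_ae hdint hWint hpt
          rw [integral_sub hMKint hLKint, hWzero] at this
          linarith
    · -- no point where r ≤ 1 :  X_M ≤ X_L a.s.
      push_neg at hA
      have hml : ∀ᵐ ω, XM ω ≤ XL ω := by
        filter_upwards [hXMpos, hXLpos, hfocM, hfocL] with ω hm hl hfm hfl
        have h1 : 1 < r (XL ω) := hA (XL ω) hl
        have h2 : UM' (XL ω) ≤ UL' (XL ω) := (hr_ge_iff (XL ω) hl).mp h1.le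
        have h3 : UM' (XL ω) ≤ UM' (XM ω) := by rw [hfm, ← hfl]; exact h2
        exact (hMant.le_iff_ge (mem_Ioi.mpr hl) (mem_Ioi.mpr hm)).mp h3
      constructor
      · exact integral_mono_ae hXMint hXLint hml
      · intro K
        have hMKint : Integrable (fun ω => max (XM ω - K) 0) :=
          (hXMint.sub (integrable_const K)).pos_part
        have hLKint : Integrable (fun ω => max (XL ω - K) 0) :=
          (hXLint.sub (integrable_const K)).pos_part
        apply integral_mono_ae hMKint hLKint
        filter_upwards [hml] with ω h
        exact max_le_max (by linarith) le_rfl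
  · -- r ≤ 1 everywhere: X_M ≥ X_L a.s., budget forces equality a.s.
    push_neg at hB
    have hlm : ∀ᵐ ω, XL ω ≤ XM ω := by
      filter_upwards [hXMpos, hXLpos, hfocM, hfocL] with ω hm hl hfm hfl
      have h1 : r (XL ω) ≤ 1 := hB (XL ω) hl
      have h2 : UL' (XL ω) ≤ UM' (XL ω) := (hr_le_iff (XL ω) hl).mp h1
      have h3 : UM' (XM ω) ≤ UM' (XL ω) := by rw [hfm, ← hfl]; exact h2
      exact (hMant.le_iff_ge (mem_Ioi.mpr hm) (mem_Ioi.mpr hl)).mp h3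
    have hnn : 0 ≤ᵐ[volume] fun ω => D ω * XM ω - D ω * XL ω := by
      filter_upwards [hlm, hDpos] with ω h hD
      have : D ω * XL ω ≤ D ω * XM ω := mul_le_mul_of_nonneg_left h hD.le
      simp only [Pi.zero_apply]
      linarith
    have hzero := (integral_eq_zero_iff_of_nonneg_ae hnn hDdiff_int).mp hDdiff0
    have heq : XM =ᵐ[volume] XL := by
      filter_upwards [hzero, hDpos] with ω h hD
      simp only [Pi.zero_apply] at h
      have : D ω * (XM ω - XL ω) = 0 := by linarith
      rcases mul_eq_zero.mp this with h' | h'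
      · exact absurd h' (ne_of_gt hD)
      · linarith
    constructor
    · exact le_of_eq (integral_congr_ae heq)
    · intro K
      apply le_of_eq
      apply integral_congr_ae
      filter_upwards [heq] with ω h
      rw [h]
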